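/- Orthogonality property of Radau polynomials: Let q ≥ 1 and let P_q denote the q-th Legendre polynomial. Then (x+1) divides P_q(x) + P_{q+1}(x) in ℝ[x], and the quotient, the q-th Radau polynomial Q_q(x) = (P_q(x) + P_{q+1}(x))/(x+1), which is a polynomial of degree q, satisfies ∫_{−1}^{1} Q_q(x) (x+1)^p dx = 0 for every p = 1, …, q. -/

import Mathlib

open MeasureTheory intervalIntegral Polynomial

/-- The `q`-th Legendre polynomial, via Rodrigues' formula
`P_q(x) = (1/(2^q q!)) (d/dx)^q ((x² − 1)^q)`. -/
noncomputable def legendrePoly (q : ℕ) : Polynomial ℝ :=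
  Polynomial.C (1 / (2 ^ q * (Nat.factorial q) : ℝ)) *
    (Polynomial.derivative^[q] ((Polynomial.X ^ 2 - 1) ^ q))

namespace RadauAux

noncomputable def f (q : ℕ) : Polynomial ℝ := (X ^ 2 - 1) ^ q

lemma dvd_iterate (q : ℕ) : ∀ m ≤ q, ∃ h : Polynomial ℝ,
    derivative^[m] (f q) = (X ^ 2 - 1) ^ (q - m) * h := by
  intro m hm
  induction m with
  | zero => exact ⟨1, by simp [f]⟩
  | succ m ih =>
    obtain ⟨h, hh⟩ := ih (by omega)
    have h1 : q - m = (q - (m + 1)) + 1 := by omega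
    refine ⟨C ((q - (m+1) : ℕ) + 1 : ℝ) * (C 2 * X) * h + (X ^ 2 - 1) * derivative h, ?_⟩
    rw [Function.iterate_succ_apply', hh, h1]
    rw [derivative_mul, derivative_pow]
    simp only [derivative_sub, derivative_one, derivative_X_pow]
    push_cast
    ring

lemma boundary_zero (q m : ℕ) (hm : m < q) (x : ℝ) (hx : x = 1 ∨ x = -1) :
    (derivative^[m] (f q)).eval x = 0 := by
  obtain ⟨h, hh⟩ := dvd_iterate q m hm.le
  have : q - m ≠ 0 := by omega
  rcases hx with rfl | rfl <;>
    simp [hh, eval_pow, zero_pow this]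

lemma ibp (u v : Polynomial ℝ) :
    ∫ x in (-1 : ℝ)..1, (derivative u).eval x * v.eval x
      = u.eval 1 * v.eval 1 - u.eval (-1) * v.eval (-1)
        - ∫ x in (-1 : ℝ)..1, u.eval x * (derivative v).eval x := by
  have hint : ∀ p : Polynomial ℝ, IntervalIntegrable (fun x => p.eval x) volume (-1 : ℝ) 1 :=
    fun p => (p.continuous).intervalIntegrable _ _
  have := intervalIntegral.integral_deriv_mul_eq_sub
    (u := fun x => u.eval x) (v := fun x => v.eval x)
    (u' := fun x => (derivative u).eval x) (v' := fun x => (derivative v).eval x)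
    (fun x _ => u.hasDerivAt x) (fun x _ => v.hasDerivAt x)
    (hint _) (hint _)
  rw [intervalIntegral.integral_add (f := fun x => (derivative u).eval x * v.eval x)
      (g := fun x => u.eval x * (derivative v).eval x) (((derivative u).continuous.mul
      v.continuous).intervalIntegrable _ _)
      ((u.continuous.mul (derivative v).continuous).intervalIntegrable _ _)] at this
  linarith

lemma key (q : ℕ) (g : Polynomial ℝ) : ∀ k ≤ q,
    ∫ x in (-1 : ℝ)..1, (derivative^[q] (f q)).eval x * g.eval x
      = (-1 : ℝ) ^ k * ∫ x in (-1 : ℝ)..1,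
          (derivative^[q - k] (f q)).eval x * (derivative^[k] g).eval x := by
  intro k hk
  induction k with
  | zero => simp
  | succ k ih =>
    rw [ih (by omega)]
    have h1 : q - k = (q - (k + 1)) + 1 := by omega
    rw [h1, Function.iterate_succ_apply',
      ibp (derivative^[q - (k+1)] (f q)) (derivative^[k] g),
      boundary_zero q _ (by omega) 1 (Or.inl rfl),
      boundary_zero q _ (by omega) (-1) (Or.inr rfl),
      ← Function.iterate_succ_apply' derivative k g]
    ring

lemma orth (n : ℕ) (g : Polynomial ℝ) (hg : g.natDegree < n) :
    ∫ x in (-1 : ℝ)..1, (legendrePoly n).eval x * g.eval x = 0 := by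
  have h0 : ∫ x in (-1 : ℝ)..1, (derivative^[n] (f n)).eval x * g.eval x = 0 := by
    rw [key n g n le_rfl, iterate_derivative_eq_zero hg]
    simp
  simp only [f] at h0
  simp only [legendrePoly, eval_mul, eval_C, mul_assoc]
  rw [intervalIntegral.integral_const_mul, h0, mul_zero]

lemma eval_neg_one (n : ℕ) : (legendrePoly n).eval (-1) = (-1 : ℝ) ^ n := by
  have hfact : (X ^ 2 - 1 : Polynomial ℝ) = (X + C 1) * (X + C (-1)) := by
    simp only [map_neg, map_one]
    ring
  have hD : (derivative^[n] ((X ^ 2 - 1 : Polynomial ℝ) ^ n)).eval (-1)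
      = (n.factorial : ℝ) * (-2) ^ n := by
    rw [hfact, mul_pow, iterate_derivative_mul]
    rw [eval_finset_sum]
    rw [Finset.sum_eq_single 0]
    · rw [Nat.choose_zero_right, one_smul, Nat.sub_zero, Function.iterate_zero_apply, eval_mul,
        show ((X : Polynomial ℝ) + C 1) ^ n = (X + C 1) ^ n from rfl,
        iterate_derivative_X_add_pow, Nat.sub_self, Nat.descFactorial_self, pow_zero]
      simp
      left
      norm_num
    · intro k hk hk0
      simp only [iterate_derivative_X_add_pow, smul_eval, eval_mul, smul_mul_assoc]
      have : n - (n - k) = k := by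
        simp only [Finset.mem_range] at hk; omega
      rw [this]
      simp [zero_pow hk0]
    · simp
  simp only [legendrePoly, eval_mul, eval_C, hD]
  have h2 : ((-2 : ℝ)) ^ n = (-1) ^ n * 2 ^ n := by rw [← neg_one_mul, mul_pow]
  rw [h2]
  have : (2 : ℝ) ^ n * (n.factorial : ℝ) ≠ 0 := by positivity
  field_simp

lemma natDegree_legendre (n : ℕ) : (legendrePoly n).natDegree = n := by
  have hmonic : ((X ^ 2 - 1 : Polynomial ℝ) ^ n).Monic := by
    have : (X ^ 2 - 1 : Polynomial ℝ) = X ^ 2 - C 1 := by simp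
    rw [this]
    exact (monic_X_pow_sub_C _ (by norm_num)).pow _
  have hdeg : ((X ^ 2 - 1 : Polynomial ℝ) ^ n).natDegree = 2 * n := by
    have hb : (X ^ 2 - 1 : Polynomial ℝ) = X ^ 2 - C 1 := by simp
    rw [hb, (monic_X_pow_sub_C (1:ℝ) (by norm_num : (2:ℕ) ≠ 0)).natDegree_pow,
      natDegree_X_pow_sub_C, mul_comm]
  have hcoeff : (derivative^[n] ((X ^ 2 - 1 : Polynomial ℝ) ^ n)).coeff n ≠ 0 := by
    rw [coeff_iterate_derivative]
    have hnn : ((X ^ 2 - 1 : Polynomial ℝ) ^ n).coeff (n + n) = 1 := by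
      have : n + n = 2 * n := by ring
      rw [this, ← hdeg]
      exact hmonic.coeff_natDegree
    rw [hnn]
    simp only [nsmul_eq_mul, smul_eq_mul, mul_one, ne_eq, Nat.cast_eq_zero,
      Nat.descFactorial_eq_zero_iff_lt]
    omega
  have hle : (derivative^[n] ((X ^ 2 - 1 : Polynomial ℝ) ^ n)).natDegree ≤ n := by
    have := natDegree_iterate_derivative ((X ^ 2 - 1 : Polynomial ℝ) ^ n) n
    omega
  have hge : n ≤ (derivative^[n] ((X ^ 2 - 1 : Polynomial ℝ) ^ n)).natDegree :=
    le_natDegree_of_ne_zero hcoeff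
  have hc : (1 / (2 ^ n * (Nat.factorial n) : ℝ)) ≠ 0 := by positivity
  rw [legendrePoly, natDegree_C_mul hc]
  omega

end RadauAux

/-- Orthogonality property of Radau polynomials: `(x+1)` divides `P_q + P_{q+1}` in `ℝ[x]`,
and the quotient `Q_q = (P_q + P_{q+1})/(x+1)`, the `q`-th Radau polynomial, has degree `q`
and satisfies `∫_{−1}^{1} Q_q(x) (x+1)^p dx = 0` for `p = 1, …, q`. -/
theorem radau_orthogonality (q : ℕ) (hq : 1 ≤ q) :
    ((Polynomial.X + Polynomial.C 1 : Polynomial ℝ) ∣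
        (legendrePoly q + legendrePoly (q + 1))) ∧
      ∀ Q : Polynomial ℝ,
        legendrePoly q + legendrePoly (q + 1) = (Polynomial.X + Polynomial.C 1) * Q →
          Q.natDegree = q ∧
            ∀ p : ℕ, 1 ≤ p → p ≤ q →
              ∫ x in (-1 : ℝ)..1, Q.eval x * (x + 1) ^ p = 0 := by
  have hdq : (legendrePoly q).natDegree = q := RadauAux.natDegree_legendre q
  have hdq1 : (legendrePoly (q + 1)).natDegree = q + 1 := RadauAux.natDegree_legendre (q + 1)
  have hS : (legendrePoly q + legendrePoly (q + 1)).natDegree = q + 1 := by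
    rw [natDegree_add_eq_right_of_natDegree_lt (by omega)]
    exact hdq1
  have hroot : (legendrePoly q + legendrePoly (q + 1)).IsRoot (-1) := by
    simp only [IsRoot, eval_add, RadauAux.eval_neg_one, pow_succ]
    ring
  have hXC : (X + C 1 : Polynomial ℝ) = X - C (-1) := by
    rw [map_neg, sub_neg_eq_add]
  have hdvd : (X + C 1 : Polynomial ℝ) ∣ (legendrePoly q + legendrePoly (q + 1)) := by
    rw [hXC]
    exact dvd_iff_isRoot.mpr hroot
  refine ⟨hdvd, ?_⟩
  intro Q hQ
  have hSne : legendrePoly q + legendrePoly (q + 1) ≠ 0 := by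
    intro h
    rw [h, natDegree_zero] at hS
    omega
  have hXne : (X + C 1 : Polynomial ℝ) ≠ 0 := (monic_X_add_C 1).ne_zero
  have hQne : Q ≠ 0 := by
    rintro rfl
    rw [mul_zero] at hQ
    exact hSne hQ
  have hdegQ : Q.natDegree = q := by
    have h := hS
    rw [hQ, natDegree_mul hXne hQne, natDegree_X_add_C] at h
    omega
  refine ⟨hdegQ, ?_⟩
  intro p hp1 hpq
  have hg : ∀ x : ℝ, Q.eval x * (x + 1) ^ p
      = (legendrePoly q).eval x * ((X + C 1 : Polynomial ℝ) ^ (p - 1)).eval x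
        + (legendrePoly (q + 1)).eval x * ((X + C 1 : Polynomial ℝ) ^ (p - 1)).eval x := by
    intro x
    have hev : (legendrePoly q).eval x + (legendrePoly (q + 1)).eval x
        = (x + 1) * Q.eval x := by
      have := congrArg (eval x) hQ
      simpa [eval_mul, eval_add] using this
    have hpow : (x + 1) ^ p = (x + 1) * (x + 1) ^ (p - 1) := by
      conv_lhs => rw [show p = 1 + (p - 1) by omega]
      rw [pow_add, pow_one]
    simp only [eval_pow, eval_add, eval_X, eval_C]
    rw [hpow, ← add_mul, hev]
    ring
  have hdegg : ((X + C 1 : Polynomial ℝ) ^ (p - 1)).natDegree = p - 1 := by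
    rw [natDegree_pow, natDegree_X_add_C, mul_one]
  have hint : ∀ n : ℕ, IntervalIntegrable
      (fun x => (legendrePoly n).eval x * ((X + C 1 : Polynomial ℝ) ^ (p - 1)).eval x)
      volume (-1 : ℝ) 1 :=
    fun n => ((legendrePoly n).continuous.mul
      ((X + C 1 : Polynomial ℝ) ^ (p - 1)).continuous).intervalIntegrable _ _
  simp only [hg]
  rw [intervalIntegral.integral_add (hint q) (hint (q + 1)),
    RadauAux.orth q _ (by omega), RadauAux.orth (q + 1) _ (by omega), add_zero]
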